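/- Let X be a finite connected poset and f : X → ℝ order preserving. Then the induced map f : R_f(X) → ℝ on the Reeb poset is strictly order preserving: if [x] < [y] then f(x) < f(y). -/
import Mathlib


open scoped Classical

namespace ReebPoset

variable {X : Type*}

/-- Two elements of a poset are comparable. -/
def Cmp [PartialOrder X] (a b : X) : Prop := a ≤ b ∨ b ≤ a

/-- A poset path from `x` to `y`: a finite sequence of consecutively comparable elements. -/
structure Path [PartialOrder X] (x y : X) where
  n : ℕ
  pts : Fin (n + 1) → X
  first : pts 0 = x
  last : pts (Fin.last n) = y
  step : ∀ i : Fin n, Cmp (pts i.castSucc) (pts i.succ)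

/-- A poset is connected if any two points are joined by a poset path. -/
def Connected (X : Type*) [PartialOrder X] : Prop := ∀ x y : X, Nonempty (Path x y)

/-- The `f`-length of a poset path. -/
noncomputable def flen [PartialOrder X] (f : X → ℝ) {x y : X} (γ : Path x y) : ℝ :=
  ∑ i : Fin γ.n, |f (γ.pts i.succ) - f (γ.pts i.castSucc)|

/-- The metric induced by the filtration `f` (the Reeb metric). -/
noncomputable def df [PartialOrder X] (f : X → ℝ) (x y : X) : ℝ :=
  sInf {L | ∃ γ : Path x y, L = flen f γ}

/-- The Gromov product associated to `f`. -/
noncomputable def gf [PartialOrder X] (f : X → ℝ) (x y : X) : ℝ :=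
  (f x + f y - df f x y) / 2

/-- The poset hyperbolicity of `(X, f)`. -/
noncomputable def hypf (X : Type*) [PartialOrder X] (f : X → ℝ) : ℝ :=
  sInf {ε : ℝ | 0 ≤ ε ∧ ∀ x y z : X, gf f x z ≥ min (gf f x y) (gf f y z) - ε}

/-- The merge value `m_f(x,y)`: max over poset paths of the min of `f` along the path. -/
noncomputable def mf [PartialOrder X] (f : X → ℝ) (x y : X) : ℝ :=
  sSup {m | ∃ γ : Path x y,
    m = Finset.univ.inf' Finset.univ_nonempty (fun i : Fin (γ.n + 1) => f (γ.pts i))}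

/-- A poset path is a fence if its points are distinct and non-consecutive points
are incomparable. -/
def IsFence [PartialOrder X] {x y : X} (γ : Path x y) : Prop :=
  Function.Injective γ.pts ∧
  ∀ i j : Fin (γ.n + 1), (i : ℕ) + 2 ≤ (j : ℕ) → ¬ Cmp (γ.pts i) (γ.pts j)

/-- The maximal length of a fence in the poset `X`. -/
noncomputable def MF (X : Type*) [PartialOrder X] : ℕ :=
  sSup {n : ℕ | ∃ x y : X, ∃ γ : Path x y, IsFence γ ∧ γ.n = n}

/-- A merging point: an element covering at least two distinct elements. -/
def Merging [PartialOrder X] (x : X) : Prop := ∃ y z : X, y ≠ z ∧ y ⋖ x ∧ z ⋖ x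

/-- A poset is a tree if every down-set is a chain. -/
def IsTreePoset (X : Type*) [PartialOrder X] : Prop :=
  ∀ a b c : X, a ≤ c → b ≤ c → (a ≤ b ∨ b ≤ a)

/-- The covering graph of a poset. -/
def covGraph (X : Type*) [PartialOrder X] : SimpleGraph X :=
  SimpleGraph.fromRel (fun a b => a ⋖ b)

/-- The number of elements covered by `x`. -/
noncomputable def iota [PartialOrder X] [Fintype X] (x : X) : ℕ :=
  (Finset.univ.filter (fun y => y ⋖ x)).card

/-- The first Betti number of a graph: the minimal number of edges one needs to remove
to obtain a tree. -/
noncomputable def betti (G : SimpleGraph X) : ℕ :=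
  sInf {k | ∃ s : Set (Sym2 X), s.ncard = k ∧ (G.deleteEdges s).IsTree}

/-- `x ∼ y` iff some poset path from `x` to `y` is `f`-constant. -/
def constRel [PartialOrder X] (f : X → ℝ) (x y : X) : Prop :=
  ∃ γ : Path x y, ∀ i : Fin (γ.n + 1), f (γ.pts i) = f x

/-- `[x] ≤ [y]` in the Reeb poset iff some poset path from `x` to `y` is `f`-nondecreasing. -/
def ndRel [PartialOrder X] (f : X → ℝ) (x y : X) : Prop :=
  ∃ γ : Path x y, ∀ i : Fin γ.n, f (γ.pts i.castSucc) ≤ f (γ.pts i.succ)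

/-- `x ∼ y` in the Reeb tree construction: some poset path from `x` to `y` has all
`f`-values at least `max (f x) (f y)`. -/
def treeEq [PartialOrder X] (f : X → ℝ) (x y : X) : Prop :=
  ∃ γ : Path x y, ∀ i : Fin (γ.n + 1), max (f x) (f y) ≤ f (γ.pts i)

/-- `[x] ≤ [y]` in the Reeb tree poset: some poset path from `x` to `y` has all
`f`-values at least `f x`. -/
def treeLe [PartialOrder X] (f : X → ℝ) (x y : X) : Prop :=
  ∃ γ : Path x y, ∀ i : Fin (γ.n + 1), f x ≤ f (γ.pts i)

end ReebPoset
open ReebPoset in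
/-- the induced map on the Reeb poset is strictly order preserving:
`[x] < [y]` implies `f x < f y`. -/
theorem stmt9 {X : Type*} [PartialOrder X] [Fintype X]
    (hc : Connected X) (f : X → ℝ) (hm : Monotone f) :
    ∀ x y : X, ndRel f x y → ¬ constRel f x y → f x < f y := by
  intro x y ⟨γ, hγ⟩ hne
  have hmono : Monotone (fun i => f (γ.pts i)) := Fin.monotone_iff_le_succ.2 hγ
  have hxy : f x ≤ f y := by
    have := hmono (Fin.zero_le (Fin.last γ.n))
    simpa [γ.first, γ.last] using this
  rcases lt_or_eq_of_le hxy with h | h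
  · exact h
  · exfalso
    apply hne
    refine ⟨γ, fun i => le_antisymm ?_ ?_⟩
    · have := hmono (Fin.le_last i)
      simpa [γ.last, ← h] using this
    · have := hmono (Fin.zero_le i)
      simpa [γ.first] using this
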